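/- There exists an integer a ≥ 2 such that for every real ε with 0 < ε ≤ 1/2 and every ε^a-sparse P5-free graph G with |G| ≥ ε^{−a}, there is an anticomplete blockade (B_1,…,B_k) in G with k ≥ ε^{−1} and |B_i| ≥ ε^a·|G| for all i ∈ [k]. -/

import Mathlib

open SimpleGraph

/-- The five-vertex path `P₅`. -/
def P5 : SimpleGraph (Fin 5) := SimpleGraph.fromRel (fun i j => (i : ℕ) + 1 = (j : ℕ))

/-- A graph is `P₅`-free if it contains no induced copy of `P5`
(equivalently, no graph embedding of `P5`). -/
def P5Free {V : Type*} (G : SimpleGraph V) : Prop := IsEmpty (P5 ↪g G)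

/-- A graph is `T`-free if it contains no induced copy of `T`. -/
def TFree {W V : Type*} (T : SimpleGraph W) (G : SimpleGraph V) : Prop := IsEmpty (T ↪g G)

/-- A stable (independent) set of vertices. -/
def IsStableSet {V : Type*} (G : SimpleGraph V) (s : Finset V) : Prop :=
  ∀ ⦃u⦄, u ∈ s → ∀ ⦃v⦄, v ∈ s → ¬ G.Adj u v

/-- The stability number `α(G)`. -/
noncomputable def alphaNum {V : Type*} [Fintype V] (G : SimpleGraph V) : ℕ :=
  sSup {n | ∃ s : Finset V, IsStableSet G s ∧ s.card = n}

/-- The clique number `ω(G)`. -/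
noncomputable def omegaNum {V : Type*} [Fintype V] (G : SimpleGraph V) : ℕ :=
  sSup {n | ∃ s : Finset V, G.IsClique (s : Set V) ∧ s.card = n}

/-- `ψ(G) = |G| / α(G)` (and `0` for the null graph). -/
noncomputable def psi {V : Type*} [Fintype V] (G : SimpleGraph V) : ℝ :=
  if Fintype.card V = 0 then 0 else (Fintype.card V : ℝ) / (alphaNum G : ℝ)

/-- `ψ(S)` for a vertex subset `S`, i.e. `ψ(G[S])`. -/
noncomputable def psiSub {V : Type*} [Fintype V] (G : SimpleGraph V) (s : Finset V) : ℝ :=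
  psi (G.induce (↑s : Set V))

/-- The Hall ratio `ρ(G)`: the maximum of `ψ(F)` over induced subgraphs `F` of `G`. -/
noncomputable def rho {V : Type*} [Fintype V] (G : SimpleGraph V) : ℝ :=
  ⨆ s : Finset V, psiSub G s

/-- `ρ(S)` for a vertex subset `S`, i.e. `ρ(G[S])`. -/
noncomputable def rhoSub {V : Type*} [Fintype V] (G : SimpleGraph V) (s : Finset V) : ℝ :=
  rho (G.induce (↑s : Set V))

/-- `(A, B)` is a complete pair: disjoint, with every vertex of `A` adjacent to every
vertex of `B`. -/
def CompletePair {V : Type*} (G : SimpleGraph V) (A B : Finset V) : Prop :=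
  Disjoint A B ∧ ∀ a ∈ A, ∀ b ∈ B, G.Adj a b

/-- `(A, B)` is an anticomplete pair: disjoint, with no edges between `A` and `B`. -/
def AnticompletePair {V : Type*} (G : SimpleGraph V) (A B : Finset V) : Prop :=
  Disjoint A B ∧ ∀ a ∈ A, ∀ b ∈ B, ¬ G.Adj a b

/-- A complete blockade: pairwise disjoint sets, pairwise complete to each other. -/
def CompleteBlockade {V : Type*} (G : SimpleGraph V) {k : ℕ} (B : Fin k → Finset V) : Prop :=
  (∀ i j, i ≠ j → Disjoint (B i) (B j)) ∧
  (∀ i j, i ≠ j → ∀ a ∈ B i, ∀ b ∈ B j, G.Adj a b)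

/-- An anticomplete blockade: pairwise disjoint sets, pairwise anticomplete to each other. -/
def AnticompleteBlockade {V : Type*} (G : SimpleGraph V) {k : ℕ} (B : Fin k → Finset V) : Prop :=
  (∀ i j, i ≠ j → Disjoint (B i) (B j)) ∧
  (∀ i j, i ≠ j → ∀ a ∈ B i, ∀ b ∈ B j, ¬ G.Adj a b)

/-- The fractional chromatic number `χ*(G)`: the least `q ≥ 0` for which there are
nonnegative weights on the stable sets summing to `q` that cover every vertex with
total weight at least `1`. -/
noncomputable def fracChrom {V : Type*} [Fintype V] [DecidableEq V] (G : SimpleGraph V) : ℝ :=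
  sInf {q : ℝ | 0 ≤ q ∧ ∃ x : Finset V → ℝ,
    (∀ s, 0 ≤ x s) ∧ (∀ s, ¬ IsStableSet G s → x s = 0) ∧
    (∑ s : Finset V, x s) = q ∧
    ∀ v : V, 1 ≤ ∑ s ∈ Finset.univ.filter (fun s : Finset V => v ∈ s), x s}

/-- `G` is `ε`-sparse: every vertex has degree at most `ε·|G|`. -/
def EpsSparse {V : Type*} [Fintype V] (ε : ℝ) (G : SimpleGraph V) : Prop :=
  ∀ v : V, ((G.neighborSet v).ncard : ℝ) ≤ ε * (Fintype.card V : ℝ)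

/-- `G` is `(1-ε)`-dense: the complement of `G` is `ε`-sparse. -/
def OneSubEpsDense {V : Type*} [Fintype V] (ε : ℝ) (G : SimpleGraph V) : Prop :=
  EpsSparse ε Gᶜ

/-- `G` is `ε`-restricted: `ε`-sparse or `(1-ε)`-dense. -/
def EpsRestricted {V : Type*} [Fintype V] (ε : ℝ) (G : SimpleGraph V) : Prop :=
  EpsSparse ε G ∨ OneSubEpsDense ε G

/-- `G` is `(p,q)`-sparse: every induced subgraph `F` with `ρ(F) ≥ q` contains an
anticomplete pair `(X,Y)` with `ρ(X), ρ(Y) ≥ p`. -/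
def PQSparse {V : Type*} [Fintype V] (G : SimpleGraph V) (p q : ℝ) : Prop :=
  ∀ s : Finset V, q ≤ rhoSub G s →
    ∃ X Y : Finset V, X ⊆ s ∧ Y ⊆ s ∧ AnticompletePair G X Y ∧
      p ≤ rhoSub G X ∧ p ≤ rhoSub G Y

/-- `φ_s = ∏_{i=1}^{s} (1 - 2^{-2^{i+1}})` (so `φ_0 = 1`). -/
noncomputable def phi (s : ℕ) : ℝ :=
  ∏ i ∈ Finset.Icc 1 s, (1 - ((2:ℝ) ^ (2 ^ (i+1)))⁻¹)

/-- `φ_{r,s} = φ_s / φ_r`. -/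
noncomputable def phiRS (r s : ℕ) : ℝ := phi s / phi r


section Stmt6AuxSection

open scoped Classical

set_option linter.unusedSectionVars false
set_option maxHeartbeats 1000000

namespace Stmt6Aux

variable {V : Type} [Fintype V] {G : SimpleGraph V}








/-- One edge step inside a vertex set `S`. -/
def stp (G : SimpleGraph V) (S : Finset V) (a b : V) : Prop := a ∈ S ∧ b ∈ S ∧ G.Adj a b

/-- Reachability inside `S`. -/
def reach (G : SimpleGraph V) (S : Finset V) (a b : V) : Prop :=
  Relation.ReflTransGen (stp G S) a b

lemma reach_symm {S : Finset V} {a b : V} (h : reach G S a b) : reach G S b a :=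
  haveI : Std.Symm (stp G S) := ⟨fun _ _ h => ⟨h.2.1, h.1, h.2.2.symm⟩⟩
  Std.Symm.symm (r := Relation.ReflTransGen (stp G S)) _ _ h

/-- Connected component of `v` inside `S`. -/
noncomputable def comp (G : SimpleGraph V) (S : Finset V) (v : V) : Finset V :=
  S.filter (reach G S v)

lemma comp_subset {S : Finset V} {v : V} : comp G S v ⊆ S := Finset.filter_subset _ _

lemma mem_comp_self {S : Finset V} {v : V} (h : v ∈ S) : v ∈ comp G S v :=
  Finset.mem_filter.2 ⟨h, Relation.ReflTransGen.refl⟩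

lemma mem_comp_of {S : Finset V} {v b : V} (hb : b ∈ S) (h : reach G S v b) :
    b ∈ comp G S v := Finset.mem_filter.2 ⟨hb, h⟩

lemma comp_closed {S : Finset V} {v b c : V} (hb : b ∈ comp G S v) (hc : c ∈ S)
    (hadj : G.Adj b c) : c ∈ comp G S v := by
  rcases Finset.mem_filter.1 hb with ⟨hbS, hr⟩
  exact Finset.mem_filter.2 ⟨hc, hr.tail ⟨hbS, hc, hadj⟩⟩

/-- `C` is connected (within itself). -/
def Conn (G : SimpleGraph V) (C : Finset V) : Prop := ∀ a ∈ C, ∀ b ∈ C, reach G C a b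

lemma reach_comp {S : Finset V} {v b : V} (h : reach G S v b) :
    reach G (comp G S v) v b := by
  induction h with
  | refl => exact Relation.ReflTransGen.refl
  | @tail b' c h₁ h₂ ih =>
      exact ih.tail ⟨mem_comp_of h₂.1 h₁, mem_comp_of h₂.2.1 (h₁.tail h₂), h₂.2.2⟩

lemma comp_conn {S : Finset V} {v : V} : Conn G (comp G S v) := by
  intro a ha b hb
  have h1 := reach_comp (G := G) (Finset.mem_filter.1 ha).2
  have h2 := reach_comp (G := G) (Finset.mem_filter.1 hb).2
  exact (reach_symm h1).trans h2

/-- Boundary: a connected set with a proper nonempty "closed-off" part has a crossing edge. -/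
lemma boundary {C T : Finset V} (hconn : Conn G C) (hTC : T ⊆ C) (hT : T.Nonempty)
    (hCT : (C \ T).Nonempty) :
    ∃ x ∈ C, x ∉ T ∧ ∃ y ∈ T, G.Adj x y := by
  obtain ⟨a, ha⟩ := hT
  obtain ⟨b, hb⟩ := hCT
  rw [Finset.mem_sdiff] at hb
  have h : reach G C a b := hconn a (hTC ha) b hb.1
  have aux : ∀ c, reach G C a c → c ∉ T → ∃ x ∈ C, x ∉ T ∧ ∃ y ∈ T, G.Adj x y := by
    intro c hr
    induction hr with
    | refl => intro hc; exact absurd ha hc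
    | @tail b' c' h₁ h₂ ih =>
        intro hc
        by_cases hb' : b' ∈ T
        · exact ⟨c', h₂.2.1, hc, b', hb', h₂.2.2.symm⟩
        · exact ih hb'
  exact aux b h hb.2

/-- A set `A` is closed in `S` if no edges leave `A` into `S`. -/
def Closed (G : SimpleGraph V) (S A : Finset V) : Prop :=
  ∀ a ∈ A, ∀ b ∈ S, G.Adj a b → b ∈ A

lemma reach_mem_closed {S A : Finset V} (hA : Closed G S A) {v b : V} (hv : v ∈ A)
    (h : reach G S v b) : b ∈ A := by
  induction h with
  | refl => exact hv
  | @tail b' c h₁ h₂ ih => exact hA _ ih _ h₂.2.1 h₂.2.2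

/-- Grouping components: if all components of `S` are small, `S` splits into two large
anticomplete parts. -/
lemma group {S : Finset V} (G : SimpleGraph V)
    (hcomp : ∀ w ∈ S, 3 * (comp G S w).card ≤ S.card) :
    ∃ X Y : Finset V, X ⊆ S ∧ Y ⊆ S ∧ Disjoint X Y ∧
      (∀ a ∈ X, ∀ b ∈ Y, ¬ G.Adj a b) ∧ S.card ≤ 3 * X.card ∧ S.card ≤ 3 * Y.card := by
  rcases S.eq_empty_or_nonempty with rfl | hS
  · exact ⟨∅, ∅, by simp, by simp, by simp, by simp, by simp, by simp⟩
  have hSF : S ∈ S.powerset.filter (fun A => Closed G S A ∧ S.card ≤ 3 * A.card) :=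
    Finset.mem_filter.2 ⟨Finset.mem_powerset_self S, fun a _ b hb _ => hb, by omega⟩
  obtain ⟨A, hAF, hmin⟩ := Finset.exists_min_image _ Finset.card ⟨S, hSF⟩
  rw [Finset.mem_filter, Finset.mem_powerset] at hAF
  obtain ⟨hAS, hAcl, hAcard⟩ := hAF
  have hA0 : A.Nonempty := by
    rw [Finset.nonempty_iff_ne_empty]
    rintro rfl
    simp only [Finset.card_empty, Nat.mul_zero, Nat.le_zero, Finset.card_eq_zero] at hAcard
    exact hS.ne_empty hAcard
  obtain ⟨a₀, ha₀⟩ := hA0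
  set C := comp G S a₀ with hCdef
  have hCA : C ⊆ A := by
    intro b hb
    exact reach_mem_closed hAcl ha₀ (Finset.mem_filter.1 hb).2
  have ha₀C : a₀ ∈ C := mem_comp_self (hAS ha₀)
  have hclosed' : Closed G S (A \ C) := by
    intro a ha b hbS hadj
    rw [Finset.mem_sdiff] at ha ⊢
    refine ⟨hAcl a ha.1 b hbS hadj, fun hbC => ha.2 ?_⟩
    exact comp_closed hbC (hAS ha.1) hadj.symm
  have hlt : (A \ C).card < A.card :=
    Finset.card_lt_card (Finset.sdiff_ssubset hCA ⟨a₀, ha₀C⟩)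
  have h3 : 3 * (A \ C).card < S.card := by
    by_contra hcon
    push_neg at hcon
    have hmem : (A \ C) ∈ S.powerset.filter (fun B => Closed G S B ∧ S.card ≤ 3 * B.card) :=
      Finset.mem_filter.2 ⟨Finset.mem_powerset.2 ((Finset.sdiff_subset).trans hAS),
        hclosed', hcon⟩
    exact absurd (hmin _ hmem) (by omega)
  have hAeq : (A \ C).card + C.card = A.card := Finset.card_sdiff_add_card_eq_card hCA
  have hC3 : 3 * C.card ≤ S.card := hcomp a₀ (hAS ha₀)
  have hAle : A.card ≤ S.card := Finset.card_le_card hAS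
  have hYcard : (S \ A).card = S.card - A.card := Finset.card_sdiff_of_subset hAS
  refine ⟨A, S \ A, hAS, Finset.sdiff_subset, Finset.disjoint_sdiff, ?_, hAcard, by omega⟩
  intro a ha b hb hadj
  rw [Finset.mem_sdiff] at hb
  exact hb.2 (hAcl a ha b hb.1 hadj)

lemma p5_adj_iff (a b : Fin 5) :
    P5.Adj a b ↔ ((a : ℕ) + 1 = (b : ℕ) ∨ (b : ℕ) + 1 = (a : ℕ)) := by
  rw [P5, SimpleGraph.fromRel_adj]
  constructor
  · rintro ⟨-, h⟩; exact h
  · intro h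
    refine ⟨Fin.ne_of_val_ne ?_, h⟩
    omega

/-- From a 5-vertex induced path we get a contradiction with `P5Free`. -/
lemma p5_of_path (hG : P5Free G) (a0 a1 a2 a3 a4 : V)
    (h01 : G.Adj a0 a1) (h12 : G.Adj a1 a2) (h23 : G.Adj a2 a3) (h34 : G.Adj a3 a4)
    (h02 : ¬ G.Adj a0 a2) (h03 : ¬ G.Adj a0 a3) (h04 : ¬ G.Adj a0 a4)
    (h13 : ¬ G.Adj a1 a3) (h14 : ¬ G.Adj a1 a4) (h24 : ¬ G.Adj a2 a4)
    (n02 : a0 ≠ a2) (n03 : a0 ≠ a3) (n04 : a0 ≠ a4)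
    (n13 : a1 ≠ a3) (n14 : a1 ≠ a4) (n24 : a2 ≠ a4) : False := by
  have n01 := G.ne_of_adj h01
  have n12 := G.ne_of_adj h12
  have n23 := G.ne_of_adj h23
  have n34 := G.ne_of_adj h34
  set f : Fin 5 → V := fun j =>
    if (j : ℕ) = 0 then a0 else if (j : ℕ) = 1 then a1 else
    if (j : ℕ) = 2 then a2 else if (j : ℕ) = 3 then a3 else a4 with hf
  have hinj : Function.Injective f := by
    intro a b hab
    fin_cases a <;> fin_cases b <;> simp only [hf] at hab <;> norm_num at hab <;>
      first
        | rfl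
        | exact absurd hab n01 | exact absurd hab.symm n01
        | exact absurd hab n02 | exact absurd hab.symm n02
        | exact absurd hab n03 | exact absurd hab.symm n03
        | exact absurd hab n04 | exact absurd hab.symm n04
        | exact absurd hab n12 | exact absurd hab.symm n12
        | exact absurd hab n13 | exact absurd hab.symm n13
        | exact absurd hab n14 | exact absurd hab.symm n14
        | exact absurd hab n23 | exact absurd hab.symm n23
        | exact absurd hab n24 | exact absurd hab.symm n24
        | exact absurd hab n34 | exact absurd hab.symm n34
  have hmap : ∀ a b : Fin 5, G.Adj (f a) (f b) ↔ P5.Adj a b := by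
    intro a b
    rw [p5_adj_iff]
    fin_cases a <;> fin_cases b <;> simp only [hf] <;> norm_num <;>
      first
        | exact G.irrefl
        | exact h01 | exact G.adj_symm h01
        | exact h12 | exact G.adj_symm h12
        | exact h23 | exact G.adj_symm h23
        | exact h34 | exact G.adj_symm h34
        | exact h02 | exact fun h => h02 h.symm
        | exact h03 | exact fun h => h03 h.symm
        | exact h04 | exact fun h => h04 h.symm
        | exact h13 | exact fun h => h13 h.symm
        | exact h14 | exact fun h => h14 h.symm
        | exact h24 | exact fun h => h24 h.symm
  exact hG.elim ⟨⟨f, hinj⟩, hmap _ _⟩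


lemma filter_adj_card_le (C : Finset V) (v : V) :
    (C.filter (fun x => G.Adj v x)).card ≤ (G.neighborSet v).ncard := by
  rw [Set.ncard_eq_toFinset_card']
  apply Finset.card_le_card
  intro x hx
  rw [Set.mem_toFinset]
  exact (Finset.mem_filter.1 hx).2

/-- The Gyárfás step recursion: a connected set reachable from the end of an induced
path (of length `i ≤ 4`) in a `P5`-free graph yields a high-degree vertex or a
balanced anticomplete pair. -/
lemma step_rec (hG : P5Free G) :
    ∀ (n : ℕ) (C : Finset V) (i : ℕ) (p : ℕ → V),
      C.card ≤ n → 1 ≤ i → i ≤ 4 →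
      (∀ j, j + 1 < i → G.Adj (p j) (p (j+1))) →
      (∀ j k, j + 2 ≤ k → k < i → ¬ G.Adj (p j) (p k) ∧ p j ≠ p k) →
      (∀ j, j + 2 ≤ i → ∀ x ∈ C, ¬ G.Adj (p j) x ∧ p j ≠ x) →
      p (i-1) ∉ C →
      (∃ y ∈ C, G.Adj (p (i-1)) y) →
      Conn G C →
      (∃ v : V, C.card ≤ 2 * 6^(4-i) * ((G.neighborSet v).ncard + 1)) ∨
      (∃ X Y : Finset V, X ⊆ C ∧ Y ⊆ C ∧ Disjoint X Y ∧ (∀ a ∈ X, ∀ b ∈ Y, ¬ G.Adj a b) ∧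
        C.card ≤ 6 * 6^(4-i) * X.card ∧ C.card ≤ 6 * 6^(4-i) * Y.card) := by
  intro n
  induction n with
  | zero =>
      intro C i p hC _ _ _ _ _ _ hy _
      obtain ⟨y, hyC, -⟩ := hy
      have := Finset.card_pos.2 ⟨y, hyC⟩
      omega
  | succ n IH =>
      intro C i p hC hi1 hi4 hadj hind havoid hlast hy hconn
      set v := p (i-1) with hv
      set D := C.filter (fun x => ¬ G.Adj v x) with hD
      have hDC : D ⊆ C := Finset.filter_subset _ _
      have hsplit : (C.filter (fun x => G.Adj v x)).card + D.card = C.card := by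
        rw [hD]
        exact Finset.card_filter_add_card_filter_not _
      have hNv := filter_adj_card_le (G := G) C v
      set M := 6^(4-i) with hM
      have hpow1 : 1 ≤ M := Nat.one_le_pow _ _ (by norm_num)
      by_cases hb : 2 * D.card < C.card
      · left
        refine ⟨v, ?_⟩
        have h1 : C.card ≤ 2 * ((G.neighborSet v).ncard + 1) := by omega
        calc C.card ≤ 2 * ((G.neighborSet v).ncard + 1) := h1
          _ ≤ 2 * M * ((G.neighborSet v).ncard + 1) :=
              Nat.mul_le_mul (by omega) le_rfl
      · push_neg at hb
        by_cases hcms : ∀ w ∈ D, 3 * (comp G D w).card ≤ D.card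
        · obtain ⟨X, Y, hXD, hYD, hdisj, hanti, hX3, hY3⟩ := group G hcms
          right
          have hX1 : C.card ≤ 6 * X.card := by omega
          have hY1 : C.card ≤ 6 * Y.card := by omega
          refine ⟨X, Y, hXD.trans hDC, hYD.trans hDC, hdisj, hanti, ?_, ?_⟩
          · calc C.card ≤ 6 * X.card := hX1
              _ ≤ 6 * M * X.card := Nat.mul_le_mul (by omega) le_rfl
          · calc C.card ≤ 6 * Y.card := hY1
              _ ≤ 6 * M * Y.card := Nat.mul_le_mul (by omega) le_rfl
        · push_neg at hcms
          obtain ⟨w, hwD, hw3⟩ := hcms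
          set C' := comp G D w with hC'def
          have hC'D : C' ⊆ D := comp_subset
          have hwC' : w ∈ C' := mem_comp_self hwD
          obtain ⟨y, hyC, hyadj⟩ := hy
          have hyD : y ∉ D := fun h => (Finset.mem_filter.1 h).2 hyadj
          have hCmC' : (C \ C').Nonempty :=
            ⟨y, Finset.mem_sdiff.2 ⟨hyC, fun h => hyD (hC'D h)⟩⟩
          obtain ⟨x, hxC, hxC', y', hy'C', hxy'⟩ :=
            boundary hconn (hC'D.trans hDC) ⟨w, hwC'⟩ hCmC'
          have hxD : x ∉ D := fun hxD => hxC' (comp_closed hy'C' hxD hxy'.symm)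
          have hvx : G.Adj v x := by
            by_contra hno
            exact hxD (Finset.mem_filter.2 ⟨hxC, hno⟩)
          have hDlt : D.card < C.card :=
            Finset.card_lt_card ((Finset.ssubset_iff_of_subset hDC).2 ⟨y, hyC, hyD⟩)
          have hC'card : C'.card ≤ n := by
            have := Finset.card_le_card hC'D
            omega
          by_cases hi4' : i = 4
          · exfalso
            subst hi4'
            have A01 := hadj 0 (by norm_num)
            have A12 := hadj 1 (by norm_num)
            have A23 := hadj 2 (by norm_num)
            have N02 := hind 0 2 (by norm_num) (by norm_num)
            have N03 := hind 0 3 (by norm_num) (by norm_num)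
            have N13 := hind 1 3 (by norm_num) (by norm_num)
            have N0x := havoid 0 (by norm_num) x hxC
            have N1x := havoid 1 (by norm_num) x hxC
            have N2x := havoid 2 (by norm_num) x hxC
            exact p5_of_path hG (p 0) (p 1) (p 2) (p 3) x A01 A12 A23 hvx
              N02.1 N03.1 N0x.1 N13.1 N1x.1 N2x.1 N02.2 N03.2 N0x.2 N13.2 N1x.2 N2x.2
          · have hi3 : i ≤ 3 := by omega
            set p' := Function.update p i x with hp'
            have hup_lt : ∀ j, j < i → p' j = p j := by
              intro j hj
              rw [hp']
              exact Function.update_of_ne (by omega) _ _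
            have hup_i : p' i = x := by rw [hp']; exact Function.update_self _ _ _
            have hxC'notin : x ∉ C' := hxC'
            have IHres := IH C' (i+1) p' hC'card (by omega) (by omega)
              (by -- adjacency along the new path
                intro j hj
                rcases Nat.lt_or_ge (j+1) i with hlt | hge
                · rw [hup_lt j (by omega), hup_lt (j+1) hlt]
                  exact hadj j hlt
                · have hji : j + 1 = i := by omega
                  rw [hup_lt j (by omega), hji, hup_i]
                  have : j = i - 1 := by omega
                  rw [this]
                  exact hvx)
              (by -- induced
                intro j k hjk hk
                rcases Nat.lt_or_ge k i with hlt | hge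
                · rw [hup_lt j (by omega), hup_lt k hlt]
                  exact hind j k hjk hlt
                · have hki : k = i := by omega
                  rw [hup_lt j (by omega), hki, hup_i]
                  exact havoid j (by omega) x hxC)
              (by -- avoid
                intro j hj z hz
                rcases Nat.lt_or_ge (j+2) (i+1) with hlt | hge
                · have hji : j + 2 ≤ i := by omega
                  rw [hup_lt j (by omega)]
                  exact havoid j hji z (hDC (hC'D hz))
                · have hji : j = i - 1 := by omega
                  rw [hup_lt j (by omega), hji]
                  have hzD := hC'D hz
                  refine ⟨(Finset.mem_filter.1 hzD).2, ?_⟩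
                  intro heq
                  exact hlast (by rw [hv, heq]; exact hDC hzD))
              (by -- endpoint not in C'
                have : i + 1 - 1 = i := by omega
                rw [this, hup_i]
                exact hxC'notin)
              (by -- endpoint has a neighbour in C'
                have h1 : i + 1 - 1 = i := by omega
                rw [h1, hup_i]
                exact ⟨y', hy'C', hxy'⟩)
              comp_conn
            have hpow : M = 6 * 6^(4-(i+1)) := by
              rw [hM, show 4 - i = (4 - (i+1)) + 1 by omega, pow_succ]
              ring
            rcases IHres with ⟨u, hu⟩ | ⟨X, Y, hXC', hYC', hdisj, hanti, hX6, hY6⟩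
            · left
              refine ⟨u, ?_⟩
              set q := (G.neighborSet u).ncard + 1 with hq
              have h6 : C.card ≤ 6 * C'.card := by omega
              calc C.card ≤ 6 * C'.card := h6
                _ ≤ 6 * (2 * 6^(4-(i+1)) * q) := Nat.mul_le_mul_left _ hu
                _ = 2 * M * q := by rw [hpow]; ring
            · right
              have h6 : C.card ≤ 6 * C'.card := by omega
              refine ⟨X, Y, (hXC'.trans hC'D).trans hDC, (hYC'.trans hC'D).trans hDC,
                hdisj, hanti, ?_, ?_⟩
              · calc C.card ≤ 6 * C'.card := h6
                  _ ≤ 6 * (6 * 6^(4-(i+1)) * X.card) := Nat.mul_le_mul_left _ hX6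
                  _ = 6 * M * X.card := by rw [hpow]; ring
              · calc C.card ≤ 6 * C'.card := h6
                  _ ≤ 6 * (6 * 6^(4-(i+1)) * Y.card) := Nat.mul_le_mul_left _ hY6
                  _ = 6 * M * Y.card := by rw [hpow]; ring

/-- Main pair lemma: any vertex set in a `P5`-free graph has a large-degree vertex or a
balanced anticomplete pair. -/
lemma pair (hG : P5Free G) (R : Finset V) :
    (∃ v : V, R.card ≤ 7776 * ((G.neighborSet v).ncard + 1)) ∨
    (∃ X Y : Finset V, X ⊆ R ∧ Y ⊆ R ∧ Disjoint X Y ∧ (∀ a ∈ X, ∀ b ∈ Y, ¬ G.Adj a b) ∧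
      R.card ≤ 23328 * X.card ∧ R.card ≤ 23328 * Y.card) := by
  by_cases hcms : ∀ u ∈ R, 3 * (comp G R u).card ≤ R.card
  · obtain ⟨X, Y, hXR, hYR, hdisj, hanti, hX3, hY3⟩ := group G hcms
    right
    exact ⟨X, Y, hXR, hYR, hdisj, hanti, by omega, by omega⟩
  · push_neg at hcms
    obtain ⟨w, hwR, hw3⟩ := hcms
    set C₀ := comp G R w with hC₀def
    have hC₀R : C₀ ⊆ R := comp_subset
    have hwC₀ : w ∈ C₀ := mem_comp_self hwR
    have hC₀conn : Conn G C₀ := comp_conn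
    set D₀ := C₀.filter (fun x => ¬ G.Adj w x ∧ x ≠ w) with hD₀
    have hD₀C₀ : D₀ ⊆ C₀ := Finset.filter_subset _ _
    have hsplit : D₀.card + (C₀.filter (fun x => ¬(¬ G.Adj w x ∧ x ≠ w))).card = C₀.card := by
      rw [hD₀]
      exact Finset.card_filter_add_card_filter_not _
    have hrest : (C₀.filter (fun x => ¬(¬ G.Adj w x ∧ x ≠ w))).card ≤
        (G.neighborSet w).ncard + 1 := by
      have hsub : C₀.filter (fun x => ¬(¬ G.Adj w x ∧ x ≠ w)) ⊆
          insert w ((G.neighborSet w).toFinset) := by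
        intro x hx
        obtain ⟨hxC, hxp⟩ := Finset.mem_filter.1 hx
        rw [Finset.mem_insert, Set.mem_toFinset]
        push_neg at hxp
        by_cases hxw : x = w
        · exact Or.inl hxw
        · refine Or.inr ?_
          by_contra hno
          exact hxw (hxp hno)
      calc (C₀.filter (fun x => ¬(¬ G.Adj w x ∧ x ≠ w))).card
          ≤ (insert w ((G.neighborSet w).toFinset)).card := Finset.card_le_card hsub
        _ ≤ (G.neighborSet w).toFinset.card + 1 := Finset.card_insert_le _ _
        _ = (G.neighborSet w).ncard + 1 := by rw [Set.ncard_eq_toFinset_card']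
    by_cases hb : 2 * D₀.card < C₀.card
    · left
      exact ⟨w, by omega⟩
    · push_neg at hb
      by_cases hcms' : ∀ u ∈ D₀, 3 * (comp G D₀ u).card ≤ D₀.card
      · obtain ⟨X, Y, hXD, hYD, hdisj, hanti, hX3, hY3⟩ := group G hcms'
        right
        exact ⟨X, Y, (hXD.trans hD₀C₀).trans hC₀R, (hYD.trans hD₀C₀).trans hC₀R,
          hdisj, hanti, by omega, by omega⟩
      · push_neg at hcms'
        obtain ⟨w', hw'D, hw'3⟩ := hcms'
        set C₁ := comp G D₀ w' with hC₁def
        have hC₁D₀ : C₁ ⊆ D₀ := comp_subset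
        have hw'C₁ : w' ∈ C₁ := mem_comp_self hw'D
        have hwD₀ : w ∉ D₀ := by
          intro h
          exact (Finset.mem_filter.1 h).2.2 rfl
        have hCmC₁ : (C₀ \ C₁).Nonempty :=
          ⟨w, Finset.mem_sdiff.2 ⟨hwC₀, fun h => hwD₀ (hC₁D₀ h)⟩⟩
        obtain ⟨x, hxC₀, hxC₁, y', hy'C₁, hxy'⟩ :=
          boundary hC₀conn (hC₁D₀.trans hD₀C₀) ⟨w', hw'C₁⟩ hCmC₁
        have hxD₀ : x ∉ D₀ := fun hmem => hxC₁ (comp_closed hy'C₁ hmem hxy'.symm)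
        have hxalt : G.Adj w x ∨ x = w := by
          by_cases hxw : x = w
          · exact Or.inr hxw
          · refine Or.inl ?_
            by_contra hno
            exact hxD₀ (Finset.mem_filter.2 ⟨hxC₀, hno, hxw⟩)
        have hstep : (∃ v : V, C₁.card ≤ 432 * ((G.neighborSet v).ncard + 1)) ∨
            (∃ X Y : Finset V, X ⊆ C₁ ∧ Y ⊆ C₁ ∧ Disjoint X Y ∧
              (∀ a ∈ X, ∀ b ∈ Y, ¬ G.Adj a b) ∧
              C₁.card ≤ 1296 * X.card ∧ C₁.card ≤ 1296 * Y.card) := by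
          rcases hxalt with hadjwx | hxw
          · -- path w, x  (length 2)
            set p : ℕ → V := fun j => if j = 0 then w else x with hp
            have hp0 : p 0 = w := by rw [hp]; simp
            have hp1 : p 1 = x := by rw [hp]; simp
            have hres := step_rec hG C₁.card C₁ 2 p le_rfl (by omega) (by omega)
              (by
                intro j hj
                have hj0 : j = 0 := by omega
                rw [hj0, hp0, hp1]
                exact hadjwx)
              (by intro j k hjk hk; exact absurd hjk (by omega))
              (by
                intro j hj z hz
                have hj0 : j = 0 := by omega
                rw [hj0, hp0]
                have hzD := Finset.mem_filter.1 (hC₁D₀ hz)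
                exact ⟨hzD.2.1, fun h => hzD.2.2 h.symm⟩)
              (by
                show p 1 ∉ C₁
                rw [hp1]
                exact hxC₁)
              (by
                refine ⟨y', hy'C₁, ?_⟩
                show G.Adj (p 1) y'
                rw [hp1]
                exact hxy')
              comp_conn
            have h216 : (6:ℕ)^(4-2) ≤ 216 := by norm_num
            rcases hres with ⟨u, hu⟩ | ⟨X, Y, hX, hY, hd, ha, h1, h2⟩
            · left
              refine ⟨u, ?_⟩
              calc C₁.card ≤ 2 * 6^(4-2) * ((G.neighborSet u).ncard + 1) := hu
                _ ≤ 432 * ((G.neighborSet u).ncard + 1) := Nat.mul_le_mul (by norm_num) le_rfl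
            · right
              refine ⟨X, Y, hX, hY, hd, ha, ?_, ?_⟩
              · calc C₁.card ≤ 6 * 6^(4-2) * X.card := h1
                  _ ≤ 1296 * X.card := Nat.mul_le_mul (by norm_num) le_rfl
              · calc C₁.card ≤ 6 * 6^(4-2) * Y.card := h2
                  _ ≤ 1296 * Y.card := Nat.mul_le_mul (by norm_num) le_rfl
          · -- x = w: path of length 1
            set p : ℕ → V := fun _ => w with hp
            have hres := step_rec hG C₁.card C₁ 1 p le_rfl (by omega) (by omega)
              (by intro j hj; exact absurd hj (by omega))
              (by intro j k hjk hk; exact absurd hjk (by omega))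
              (by intro j hj z hz; exact absurd hj (by omega))
              (by
                show p 0 ∉ C₁
                intro h
                exact hwD₀ (hC₁D₀ h))
              ⟨y', hy'C₁, show G.Adj w y' from hxw ▸ hxy'⟩
              comp_conn
            rcases hres with ⟨u, hu⟩ | ⟨X, Y, hX, hY, hd, ha, h1, h2⟩
            · left
              refine ⟨u, ?_⟩
              calc C₁.card ≤ 2 * 6^(4-1) * ((G.neighborSet u).ncard + 1) := hu
                _ ≤ 432 * ((G.neighborSet u).ncard + 1) := Nat.mul_le_mul (by norm_num) le_rfl
            · right
              refine ⟨X, Y, hX, hY, hd, ha, ?_, ?_⟩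
              · calc C₁.card ≤ 6 * 6^(4-1) * X.card := h1
                  _ ≤ 1296 * X.card := Nat.mul_le_mul (by norm_num) le_rfl
              · calc C₁.card ≤ 6 * 6^(4-1) * Y.card := h2
                  _ ≤ 1296 * Y.card := Nat.mul_le_mul (by norm_num) le_rfl
        rcases hstep with ⟨u, hu⟩ | ⟨X, Y, hX, hY, hd, ha, h1, h2⟩
        · left
          exact ⟨u, by omega⟩
        · right
          exact ⟨X, Y, ((hX.trans hC₁D₀).trans hD₀C₀).trans hC₀R,
            ((hY.trans hC₁D₀).trans hD₀C₀).trans hC₀R, hd, ha, by omega, by omega⟩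

/-- Binary splitting: `2^t` pairwise-anticomplete blocks, each of proportion `23328^{-t}`. -/
lemma tree (hG : P5Free G) :
    ∀ (t : ℕ) (R : Finset V),
      (∀ v : V, 7776 * ((G.neighborSet v).ncard + 1) * 23328 ^ t ≤ R.card) →
      ∃ B : Fin (2^t) → Finset V,
        (∀ i, B i ⊆ R) ∧ (∀ i j, i ≠ j → Disjoint (B i) (B j)) ∧
        (∀ i j, i ≠ j → ∀ a ∈ B i, ∀ b ∈ B j, ¬ G.Adj a b) ∧
        (∀ i, R.card ≤ 23328 ^ t * (B i).card) := by
  intro t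
  induction t with
  | zero =>
      intro R _
      refine ⟨fun _ => R, fun _ => le_rfl, ?_, ?_, ?_⟩
      · intro i j hij
        exfalso
        apply hij
        apply Fin.ext
        have hi := i.isLt
        have hj := j.isLt
        simp only [pow_zero] at hi hj
        omega
      · intro i j hij
        exfalso
        apply hij
        apply Fin.ext
        have hi := i.isLt
        have hj := j.isLt
        simp only [pow_zero] at hi hj
        omega
      · intro i
        simp
  | succ t IH =>
      intro R hdeg
      have hpairres := pair hG R
      have hnotdeg : ¬ ∃ v : V, R.card ≤ 7776 * ((G.neighborSet v).ncard + 1) := by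
        rintro ⟨v, hv⟩
        have h1 := hdeg v
        have h2 : 0 < 7776 * ((G.neighborSet v).ncard + 1) := by positivity
        have h3 : (23328:ℕ) ^ (t+1) ≥ 2 := by
          calc (2:ℕ) ≤ 23328 ^ 1 := by norm_num
            _ ≤ 23328 ^ (t+1) := Nat.pow_le_pow_right (by norm_num) (by omega)
        nlinarith
      rcases hpairres with hdg | ⟨X, Y, hXR, hYR, hdisj, hanti, hX, hY⟩
      · exact absurd hdg hnotdeg
      have hXdeg : ∀ v : V, 7776 * ((G.neighborSet v).ncard + 1) * 23328 ^ t ≤ X.card := by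
        intro v
        have h1 := hdeg v
        have h2 : 7776 * ((G.neighborSet v).ncard + 1) * 23328 ^ t * 23328 ≤ X.card * 23328 := by
          calc 7776 * ((G.neighborSet v).ncard + 1) * 23328 ^ t * 23328
              = 7776 * ((G.neighborSet v).ncard + 1) * 23328 ^ (t+1) := by ring
            _ ≤ R.card := h1
            _ ≤ 23328 * X.card := hX
            _ = X.card * 23328 := by ring
        exact Nat.le_of_mul_le_mul_right h2 (by norm_num)
      have hYdeg : ∀ v : V, 7776 * ((G.neighborSet v).ncard + 1) * 23328 ^ t ≤ Y.card := by
        intro v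
        have h1 := hdeg v
        have h2 : 7776 * ((G.neighborSet v).ncard + 1) * 23328 ^ t * 23328 ≤ Y.card * 23328 := by
          calc 7776 * ((G.neighborSet v).ncard + 1) * 23328 ^ t * 23328
              = 7776 * ((G.neighborSet v).ncard + 1) * 23328 ^ (t+1) := by ring
            _ ≤ R.card := h1
            _ ≤ 23328 * Y.card := hY
            _ = Y.card * 23328 := by ring
        exact Nat.le_of_mul_le_mul_right h2 (by norm_num)
      obtain ⟨BX, hBXsub, hBXdisj, hBXanti, hBXcard⟩ := IH X hXdeg
      obtain ⟨BY, hBYsub, hBYdisj, hBYanti, hBYcard⟩ := IH Y hYdeg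
      have h2t : 2^(t+1) = 2^t + 2^t := by
        rw [pow_succ]
        ring
      refine ⟨fun i => if h : (i : ℕ) < 2^t then BX ⟨i, h⟩
        else BY ⟨(i : ℕ) - 2^t, by have := i.isLt; omega⟩, ?_, ?_, ?_, ?_⟩
      · intro i
        dsimp only
        by_cases h : (i : ℕ) < 2^t
        · rw [dif_pos h]
          exact (hBXsub _).trans hXR
        · rw [dif_neg h]
          exact (hBYsub _).trans hYR
      · intro i j hij
        dsimp only
        by_cases hi : (i : ℕ) < 2^t <;> by_cases hj : (j : ℕ) < 2^t
        · rw [dif_pos hi, dif_pos hj]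
          refine hBXdisj _ _ ?_
          intro heq
          apply hij
          apply Fin.ext
          have h2 := congrArg Fin.val heq
          exact h2
        · rw [dif_pos hi, dif_neg hj]
          exact Finset.disjoint_of_subset_left (hBXsub _)
            (Finset.disjoint_of_subset_right (hBYsub _) hdisj)
        · rw [dif_neg hi, dif_pos hj]
          exact Finset.disjoint_of_subset_left (hBYsub _)
            (Finset.disjoint_of_subset_right (hBXsub _) hdisj.symm)
        · rw [dif_neg hi, dif_neg hj]
          refine hBYdisj _ _ ?_
          intro heq
          have := congrArg Fin.val heq
          simp only at this
          exact hij (Fin.ext (by omega))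
      · intro i j hij
        dsimp only
        by_cases hi : (i : ℕ) < 2^t <;> by_cases hj : (j : ℕ) < 2^t
        · rw [dif_pos hi, dif_pos hj]
          refine hBXanti _ _ ?_
          intro heq
          apply hij
          apply Fin.ext
          have h2 := congrArg Fin.val heq
          exact h2
        · rw [dif_pos hi, dif_neg hj]
          intro a ha b hb
          exact hanti a (hBXsub _ ha) b (hBYsub _ hb)
        · rw [dif_neg hi, dif_pos hj]
          intro a ha b hb hadj
          exact hanti b (hBXsub _ hb) a (hBYsub _ ha) hadj.symm
        · rw [dif_neg hi, dif_neg hj]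
          refine hBYanti _ _ ?_
          intro heq
          have := congrArg Fin.val heq
          simp only at this
          exact hij (Fin.ext (by omega))
      · intro i
        dsimp only
        by_cases h : (i : ℕ) < 2^t
        · rw [dif_pos h]
          calc R.card ≤ 23328 * X.card := hX
            _ ≤ 23328 * (23328 ^ t * (BX ⟨i, h⟩).card) := Nat.mul_le_mul_left _ (hBXcard _)
            _ = 23328 ^ (t+1) * (BX ⟨i, h⟩).card := by ring
        · rw [dif_neg h]
          calc R.card ≤ 23328 * Y.card := hY
            _ ≤ 23328 * (23328 ^ t * (BY _).card) := Nat.mul_le_mul_left _ (hBYcard _)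
            _ = 23328 ^ (t+1) * (BY _).card := by ring

end Stmt6Aux

end Stmt6AuxSection

open scoped Classical

set_option maxHeartbeats 1000000 in
set_option maxRecDepth 20000 in
/-- There exists `a ≥ 2` such that for every `ε ∈ (0, 1/2]` and every
`εᵃ`-sparse `P₅`-free graph `G` with `|G| ≥ ε⁻ᵃ`, there is an anticomplete blockade
`(B₁,…,B_k)` in `G` with `k ≥ ε⁻¹` and `|Bᵢ| ≥ εᵃ|G|` for all `i`. -/
theorem stmt_6 : ∃ a : ℕ, 2 ≤ a ∧
    ∀ ε : ℝ, 0 < ε → ε ≤ 1/2 →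
    ∀ (V : Type) [Fintype V] (G : SimpleGraph V), P5Free G → EpsSparse (ε ^ a) G →
      (ε ^ a)⁻¹ ≤ (Fintype.card V : ℝ) →
      ∃ (k : ℕ) (B : Fin k → Finset V), ε⁻¹ ≤ (k : ℝ) ∧ AnticompleteBlockade G B ∧
        ∀ i, ε ^ a * (Fintype.card V : ℝ) ≤ (B i).card := by
  refine ⟨100, by norm_num, ?_⟩
  intro ε hε hε2 V _ G hP5 hsp hcard
  set n := Fintype.card V with hn
  have hεpos : (0:ℝ) < ε ^ 100 := by positivity
  have hεn1 : (1:ℝ) ≤ ε ^ 100 * n := by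
    have h := mul_le_mul_of_nonneg_left hcard (le_of_lt hεpos)
    rwa [mul_inv_cancel₀ (ne_of_gt hεpos)] at h
  have hinv2 : (2:ℝ) ≤ ε⁻¹ := by
    have h := one_div_le_one_div_of_le hε hε2
    rw [one_div] at h
    norm_num at h
    exact h
  set k0 := ⌈ε⁻¹⌉₊ with hk0def
  have hk0ge : (ε⁻¹ : ℝ) ≤ k0 := Nat.le_ceil _
  have hk02 : 2 ≤ k0 := by
    have h2 : (2:ℝ) ≤ (k0:ℝ) := le_trans hinv2 hk0ge
    exact_mod_cast h2
  set t := Nat.clog 2 k0 with htdef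
  have ht1 : k0 ≤ 2^t := Nat.le_pow_clog (by norm_num) _
  have htpos : 0 < t := Nat.clog_pos (by norm_num) (by omega)
  have ht2 : 2^(t-1) < k0 := Nat.pow_pred_clog_lt_self (by norm_num) (by omega)
  have hc1 : ((2:ℝ))^(t-1) ≤ (k0:ℝ) - 1 := by
    have h1 : (2:ℕ)^(t-1) ≤ k0 - 1 := by omega
    have h2 : (((2:ℕ)^(t-1) : ℕ) : ℝ) ≤ ((k0 - 1 : ℕ) : ℝ) := Nat.cast_le.2 h1
    rw [Nat.cast_sub (by omega : 1 ≤ k0)] at h2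
    push_cast at h2
    exact h2
  have hceil : (k0:ℝ) < ε⁻¹ + 1 := Nat.ceil_lt_add_one (le_of_lt (inv_pos.2 hε))
  have h2t : ((2:ℝ))^t ≤ 2 * ε⁻¹ := by
    have hts : t = (t-1) + 1 := by omega
    calc ((2:ℝ))^t = 2 * 2^(t-1) := by conv_lhs => rw [hts, pow_succ, mul_comm]
      _ ≤ 2 * ((k0:ℝ) - 1) := by linarith
      _ ≤ 2 * ε⁻¹ := by linarith
  have hpow70 : ε^100 * (ε^30)⁻¹ = ε^70 := by
    rw [show (100:ℕ) = 70 + 30 by norm_num, pow_add]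
    field_simp
  have hTbound : ((23328:ℝ))^t ≤ (ε^30)⁻¹ := by
    have h1 : ((23328:ℝ))^t ≤ ((2:ℝ)^15)^t :=
      pow_le_pow_left₀ (by norm_num) (by norm_num) t
    have h2 : ((2:ℝ)^15)^t = ((2:ℝ)^t)^15 := by
      rw [← pow_mul, ← pow_mul, mul_comm]
    have h3 : ((2:ℝ)^t)^15 ≤ (2*ε⁻¹)^15 :=
      pow_le_pow_left₀ (by positivity) h2t 15
    have h4 : ((2:ℝ)*ε⁻¹)^15 ≤ (ε⁻¹*ε⁻¹)^15 := by
      have hinvpos : (0:ℝ) < ε⁻¹ := inv_pos.2 hε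
      exact pow_le_pow_left₀ (by positivity) (by nlinarith) 15
    have h5 : ((ε⁻¹:ℝ)*ε⁻¹)^15 = (ε^30)⁻¹ := by
      rw [← mul_inv, inv_pow]
      congr 1
      ring
    calc ((23328:ℝ))^t ≤ ((2:ℝ)^15)^t := h1
      _ = ((2:ℝ)^t)^15 := h2
      _ ≤ (2*ε⁻¹)^15 := h3
      _ ≤ (ε⁻¹*ε⁻¹)^15 := h4
      _ = (ε^30)⁻¹ := h5
  have hTpos : (0:ℝ) < (23328:ℝ)^t := by positivity
  have hε70 : ε^70 ≤ 1 := pow_le_one₀ (le_of_lt hε) (by linarith)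
  have hnn : (0:ℝ) ≤ (n:ℝ) := Nat.cast_nonneg n
  have htree : ∀ v : V, 7776 * ((G.neighborSet v).ncard + 1) * 23328 ^ t ≤
      (Finset.univ : Finset V).card := by
    intro v
    have hdeg := hsp v
    have hstep1 : (((G.neighborSet v).ncard : ℝ) + 1) ≤ 2 * (ε^100 * n) := by linarith
    have hreal : (7776:ℝ) * (((G.neighborSet v).ncard : ℝ) + 1) * 23328^t ≤ n := by
      have hq : (0:ℝ) ≤ ((G.neighborSet v).ncard : ℝ) + 1 := by positivity
      calc (7776:ℝ) * (((G.neighborSet v).ncard:ℝ) + 1) * 23328^t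
          ≤ 7776 * (2 * (ε^100 * n)) * (ε^30)⁻¹ := by gcongr
        _ = 15552 * (ε^100 * (ε^30)⁻¹) * n := by ring
        _ = 15552 * ε^70 * n := by rw [hpow70]
        _ ≤ 1 * n := by
            have ha : ε^70 ≤ (2⁻¹:ℝ)^70 := by
              apply pow_le_pow_left₀ (le_of_lt hε)
              rw [show (2⁻¹:ℝ) = 1/2 by norm_num]
              exact hε2
            have hb : (15552:ℝ) * ε^70 ≤ 15552 * (2⁻¹:ℝ)^70 := by nlinarith
            have hcc : (15552:ℝ) * (2⁻¹:ℝ)^70 ≤ 1 := by norm_num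
            nlinarith
        _ = n := one_mul _
    rw [Finset.card_univ]
    exact_mod_cast hreal
  obtain ⟨B, hBsub, hBdisj, hBanti, hBcard⟩ := Stmt6Aux.tree hP5 t Finset.univ htree
  refine ⟨2^t, B, ?_, ⟨hBdisj, hBanti⟩, ?_⟩
  · calc ε⁻¹ ≤ (k0:ℝ) := hk0ge
      _ ≤ ((2^t : ℕ) : ℝ) := Nat.cast_le.2 ht1
  · intro i
    have h1 := hBcard i
    rw [Finset.card_univ] at h1
    have h1r : (n:ℝ) ≤ (23328:ℝ)^t * ((B i).card : ℝ) := by exact_mod_cast h1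
    have key : ε^100 * (n:ℝ) * (23328:ℝ)^t ≤ ((B i).card : ℝ) * (23328:ℝ)^t := by
      have hmm : (0:ℝ) ≤ ε^100 * n := by positivity
      calc ε^100 * (n:ℝ) * (23328:ℝ)^t ≤ ε^100 * n * (ε^30)⁻¹ := by gcongr
        _ = (ε^100 * (ε^30)⁻¹) * n := by ring
        _ = ε^70 * n := by rw [hpow70]
        _ ≤ 1 * n := by nlinarith
        _ = n := one_mul _
        _ ≤ (23328:ℝ)^t * ((B i).card : ℝ) := h1r
        _ = ((B i).card : ℝ) * (23328:ℝ)^t := by ring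
    exact le_of_mul_le_mul_right key hTpos
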